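/- Let f, g : ℝ × ℝ → ℝ be continuous with f(1,1) > 0 and g(1,1) > 0. Then there exists ε ∈ (0,1) such that every solution (x(t), y(t)) of the coupled replicator system defined on [0,∞) with values in [0,1] × [0,1] and initial condition (x(0), y(0)) ∈ (1 − ε, 1) × (1 − ε, 1) has x and y nondecreasing on [0,∞) and satisfies (x(t), y(t)) → (1,1) as t → ∞; that is, the resident strategy pair (SH, HQ) resists rare invasions by mutants on either side. -/
import Mathlib


open Filter Topology

private lemma repl_mono_aux (u w : ℝ → ℝ) (s : Set ℝ) (hs : Convex ℝ s)
    (hu : ∀ t ∈ s, HasDerivAt u (w t) t)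
    (hw : ∀ t ∈ interior s, 0 ≤ w t) : MonotoneOn u s := by
  apply monotoneOn_of_deriv_nonneg hs
  · exact fun t ht => (hu t ht).continuousAt.continuousWithinAt
  · exact fun t ht =>
      ((hu t (interior_subset ht)).differentiableAt).differentiableWithinAt
  · intro t ht
    rw [(hu t (interior_subset ht)).deriv]
    exact hw t ht

private lemma repl_lim_aux (u : ℝ → ℝ) (hmono : MonotoneOn u (Set.Ici 0))
    (hb : ∀ t ≥ (0:ℝ), u t ≤ 1) :
    ∃ L, (∀ t ≥ (0:ℝ), u t ≤ L) ∧ u 0 ≤ L ∧ L ≤ 1 ∧ Tendsto u atTop (𝓝 L) := by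
  have hne : (u '' Set.Ici 0).Nonempty := ⟨u 0, ⟨0, Set.self_mem_Ici, rfl⟩⟩
  have hbdd : BddAbove (u '' Set.Ici 0) := ⟨1, by rintro _ ⟨t, ht, rfl⟩; exact hb t ht⟩
  set L := sSup (u '' Set.Ici 0) with hLdef
  have hle : ∀ t ≥ (0:ℝ), u t ≤ L := fun t ht => le_csSup hbdd ⟨t, ht, rfl⟩
  refine ⟨L, hle, hle 0 le_rfl,
    csSup_le hne (by rintro _ ⟨t, ht, rfl⟩; exact hb t ht), ?_⟩
  rw [tendsto_order]
  constructor
  · intro a ha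
    obtain ⟨_, ⟨t0, ht0, rfl⟩, hat0⟩ := exists_lt_of_lt_csSup hne ha
    filter_upwards [eventually_ge_atTop t0] with t ht
    exact lt_of_lt_of_le hat0 (hmono ht0 (le_trans ht0 ht) ht)
  · intro a ha
    filter_upwards [eventually_ge_atTop (0:ℝ)] with t ht
    exact lt_of_le_of_lt (hle t ht) ha

private lemma repl_limone_aux (F : ℝ × ℝ → ℝ) (hF : Continuous F)
    (ε : ℝ) (hε1 : ε < 1)
    (hFpos : ∀ p : ℝ × ℝ, 1 - ε ≤ p.1 → p.1 ≤ 1 → 1 - ε ≤ p.2 → p.2 ≤ 1 → 0 < F p)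
    (u v : ℝ → ℝ) (L M : ℝ)
    (hu : ∀ t ≥ (0:ℝ), HasDerivAt u (u t * (1 - u t) * F (u t, v t)) t)
    (hulb : ∀ t ≥ (0:ℝ), 1 - ε ≤ u t) (hub : ∀ t ≥ (0:ℝ), u t ≤ L)
    (hL1 : L ≤ 1) (hMlb : 1 - ε ≤ M) (hM1 : M ≤ 1)
    (hLt : Tendsto u atTop (𝓝 L)) (hMt : Tendsto v atTop (𝓝 M)) :
    L = 1 := by
  by_contra h
  have hL1' : L < 1 := lt_of_le_of_ne hL1 h
  have hLlb : 1 - ε ≤ L := le_trans (hulb 0 le_rfl) (hub 0 le_rfl)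
  have hδ : 0 < F (L, M) := hFpos (L, M) hLlb hL1 hMlb hM1
  set δ := F (L, M) with hδdef
  have hFt : Tendsto (fun t => F (u t, v t)) atTop (𝓝 δ) :=
    (hF.tendsto (L, M)).comp (hLt.prodMk_nhds hMt)
  have hev : ∀ᶠ t in atTop, δ / 2 < F (u t, v t) :=
    hFt.eventually (eventually_gt_nhds (half_lt_self hδ))
  obtain ⟨t0, ht0⟩ := eventually_atTop.1 hev
  set t1 := max t0 0 with ht1def
  have ht10 : (0:ℝ) ≤ t1 := le_max_right _ _
  set c := (1 - ε) * (1 - L) * (δ / 2) with hcdef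
  have hc : 0 < c := by
    apply mul_pos (mul_pos (by linarith) (by linarith)) (by linarith)
  have hderiv : ∀ t ∈ interior (Set.Ici t1),
      c ≤ deriv u t := by
    intro t ht
    rw [interior_Ici] at ht
    have ht' : t1 ≤ t := le_of_lt ht
    have htnn : (0:ℝ) ≤ t := le_trans ht10 ht'
    rw [(hu t htnn).deriv]
    have h1 : 1 - ε ≤ u t := hulb t htnn
    have h2 : 1 - L ≤ 1 - u t := by linarith [hub t htnn]
    have h3 : δ / 2 ≤ F (u t, v t) :=
      le_of_lt (ht0 t (le_trans (le_max_left _ _) ht'))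
    have h4 : (1 - ε) * (1 - L) ≤ u t * (1 - u t) :=
      mul_le_mul h1 h2 (by linarith) (by linarith)
    calc c ≤ u t * (1 - u t) * (δ / 2) := by
            apply mul_le_mul_of_nonneg_right h4 (by linarith)
      _ ≤ u t * (1 - u t) * F (u t, v t) := by
            apply mul_le_mul_of_nonneg_left h3
            exact mul_nonneg (by linarith) (by linarith)
  have hcont : ContinuousOn u (Set.Ici t1) := fun t ht =>
    (hu t (le_trans ht10 ht)).continuousAt.continuousWithinAt
  have hdiff : DifferentiableOn ℝ u (interior (Set.Ici t1)) := by
    intro t ht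
    rw [interior_Ici] at ht
    exact ((hu t (le_trans ht10 (le_of_lt ht))).differentiableAt).differentiableWithinAt
  have hle12 : t1 ≤ t1 + 2 / c := by
    have : 0 < 2 / c := div_pos two_pos hc
    linarith
  have hmem2 : t1 + 2 / c ∈ Set.Ici t1 := hle12
  have key := (convex_Ici t1).mul_sub_le_image_sub_of_le_deriv hcont hdiff hderiv
    t1 Set.self_mem_Ici (t1 + 2 / c) hmem2 hle12
  have h2c : c * (t1 + 2 / c - t1) = 2 := by
    field_simp
    ring
  rw [h2c] at key
  have hT0 : (0:ℝ) ≤ t1 + 2 / c := by positivity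
  have := hub (t1 + 2 / c) hT0
  have := hulb t1 ht10
  linarith

/-- If `f, g` are continuous with `f (1,1) > 0` and
`g (1,1) > 0`, then there exists `ε ∈ (0,1)` such that every `[0,1]²`-valued
solution of the coupled replicator system on `[0,∞)` with initial condition in
`(1-ε, 1) × (1-ε, 1)` has `x` and `y` nondecreasing on `[0,∞)` and converges
to `(1,1)` as `t → ∞`: the resident strategy pair (SH, HQ) resists rare
invasions by mutants on either side. -/
theorem replicator_resists_rare_invasions
    (f g : ℝ × ℝ → ℝ) (hf : Continuous f) (hg : Continuous g)
    (hf11 : 0 < f (1, 1)) (hg11 : 0 < g (1, 1)) :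
    ∃ ε ∈ Set.Ioo (0 : ℝ) 1,
      ∀ x y : ℝ → ℝ,
        (∀ t ≥ (0 : ℝ), HasDerivAt x (x t * (1 - x t) * f (x t, y t)) t) →
        (∀ t ≥ (0 : ℝ), HasDerivAt y (y t * (1 - y t) * g (x t, y t)) t) →
        (∀ t ≥ (0 : ℝ), x t ∈ Set.Icc (0 : ℝ) 1 ∧ y t ∈ Set.Icc (0 : ℝ) 1) →
        x 0 ∈ Set.Ioo (1 - ε) 1 → y 0 ∈ Set.Ioo (1 - ε) 1 →
        MonotoneOn x (Set.Ici 0) ∧ MonotoneOn y (Set.Ici 0) ∧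
          Tendsto (fun t => (x t, y t)) atTop (𝓝 ((1 : ℝ), (1 : ℝ))) := by
  obtain ⟨δ, hδ0, hδ⟩ := Metric.isOpen_iff.1
    ((isOpen_Ioi.preimage hf).inter (isOpen_Ioi.preimage hg)) (1, 1) ⟨hf11, hg11⟩
  set ε := min (δ / 2) (1 / 2) with hεdef
  have hε0 : 0 < ε := lt_min (by linarith) one_half_pos
  have hε1 : ε < 1 := lt_of_le_of_lt (min_le_right _ _) (by norm_num)
  have hpos : ∀ p : ℝ × ℝ, 1 - ε ≤ p.1 → p.1 ≤ 1 → 1 - ε ≤ p.2 → p.2 ≤ 1 →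
      0 < f p ∧ 0 < g p := by
    intro p h1 h2 h3 h4
    have hmem : p ∈ Metric.ball ((1:ℝ), (1:ℝ)) δ := by
      rw [Metric.mem_ball, Prod.dist_eq]
      have e1 : dist p.1 1 ≤ ε := by
        rw [Real.dist_eq, abs_le]; constructor <;> linarith
      have e2 : dist p.2 1 ≤ ε := by
        rw [Real.dist_eq, abs_le]; constructor <;> linarith
      have hεδ : ε < δ := lt_of_le_of_lt (min_le_left _ _) (by linarith)
      exact lt_of_le_of_lt (max_le e1 e2) hεδ
    exact hδ hmem
  refine ⟨ε, ⟨hε0, hε1⟩, ?_⟩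
  intro x y hx hy hrange hx0 hy0
  have hxc : ContinuousOn x (Set.Ici 0) := fun t ht =>
    (hx t ht).continuousAt.continuousWithinAt
  have hyc : ContinuousOn y (Set.Ici 0) := fun t ht =>
    (hy t ht).continuousAt.continuousWithinAt
  -- forward invariance of the square (1-ε, 1]²
  have hB : ∀ t ≥ (0:ℝ), 1 - ε < x t ∧ 1 - ε < y t := by
    by_contra hcon
    push_neg at hcon
    obtain ⟨t, ht, hbad⟩ := hcon
    set B := {s : ℝ | 0 ≤ s ∧ (x s ≤ 1 - ε ∨ y s ≤ 1 - ε)} with hBdef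
    have htB : t ∈ B := by
      refine ⟨ht, ?_⟩
      by_cases hxt : 1 - ε < x t
      · exact Or.inr (hbad hxt)
      · exact Or.inl (not_lt.1 hxt)
    have hBclosed : IsClosed B := by
      have h1 := hxc.preimage_isClosed_of_isClosed isClosed_Ici
        (isClosed_Iic (a := 1 - ε))
      have h2 := hyc.preimage_isClosed_of_isClosed isClosed_Ici
        (isClosed_Iic (a := 1 - ε))
      have hBeq : B = (Set.Ici 0 ∩ x ⁻¹' Set.Iic (1 - ε)) ∪
          (Set.Ici 0 ∩ y ⁻¹' Set.Iic (1 - ε)) := by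
        ext s
        simp only [hBdef, Set.mem_setOf_eq, Set.mem_union, Set.mem_inter_iff,
          Set.mem_Ici, Set.mem_preimage, Set.mem_Iic]
        tauto
      rw [hBeq]; exact h1.union h2
    have hBne : B.Nonempty := ⟨t, htB⟩
    have hBbdd : BddBelow B := ⟨0, fun s hs => hs.1⟩
    set T := sInf B with hTdef
    have hTB : T ∈ B := hBclosed.csInf_mem hBne hBbdd
    have hT0 : 0 ≤ T := hTB.1
    have hnotB : ∀ s, 0 ≤ s → s < T → 1 - ε < x s ∧ 1 - ε < y s := by
      intro s hs hsT
      by_contra hc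
      have hsB : s ∈ B := by
        refine ⟨hs, ?_⟩
        rcases not_and_or.1 hc with h | h
        · exact Or.inl (not_lt.1 h)
        · exact Or.inr (not_lt.1 h)
      exact absurd (csInf_le hBbdd hsB) (not_le.2 hsT)
    have hT0' : 0 < T := by
      rcases eq_or_lt_of_le hT0 with h | h
      · exfalso
        rcases hTB.2 with hb | hb
        · rw [← h] at hb; exact absurd hx0.1 (not_lt.2 hb)
        · rw [← h] at hb; exact absurd hy0.1 (not_lt.2 hb)
      · exact h
    have hmx : MonotoneOn x (Set.Icc 0 T) := by
      refine repl_mono_aux x _ _ (convex_Icc 0 T) (fun s hs => hx s hs.1) ?_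
      intro s hs
      rw [interior_Icc] at hs
      have h1 := hnotB s (le_of_lt hs.1) hs.2
      have h2 := hrange s (le_of_lt hs.1)
      have h3 := (hpos (x s, y s) (le_of_lt h1.1) h2.1.2 (le_of_lt h1.2) h2.2.2).1
      exact mul_nonneg (mul_nonneg h2.1.1 (by linarith [h2.1.2])) (le_of_lt h3)
    have hmy : MonotoneOn y (Set.Icc 0 T) := by
      refine repl_mono_aux y _ _ (convex_Icc 0 T) (fun s hs => hy s hs.1) ?_
      intro s hs
      rw [interior_Icc] at hs
      have h1 := hnotB s (le_of_lt hs.1) hs.2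
      have h2 := hrange s (le_of_lt hs.1)
      have h3 := (hpos (x s, y s) (le_of_lt h1.1) h2.1.2 (le_of_lt h1.2) h2.2.2).2
      exact mul_nonneg (mul_nonneg h2.2.1 (by linarith [h2.2.2])) (le_of_lt h3)
    have hxT : x 0 ≤ x T := hmx ⟨le_rfl, hT0⟩ ⟨hT0, le_rfl⟩ hT0
    have hyT : y 0 ≤ y T := hmy ⟨le_rfl, hT0⟩ ⟨hT0, le_rfl⟩ hT0
    rcases hTB.2 with h | h
    · linarith [hx0.1]
    · linarith [hy0.1]
  -- global monotonicity
  have hmonox : MonotoneOn x (Set.Ici 0) := by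
    refine repl_mono_aux x _ _ (convex_Ici 0) (fun s hs => hx s hs) ?_
    intro s hs
    rw [interior_Ici] at hs
    have h1 := hB s (le_of_lt hs)
    have h2 := hrange s (le_of_lt hs)
    have h3 := (hpos (x s, y s) (le_of_lt h1.1) h2.1.2 (le_of_lt h1.2) h2.2.2).1
    exact mul_nonneg (mul_nonneg h2.1.1 (by linarith [h2.1.2])) (le_of_lt h3)
  have hmonoy : MonotoneOn y (Set.Ici 0) := by
    refine repl_mono_aux y _ _ (convex_Ici 0) (fun s hs => hy s hs) ?_
    intro s hs
    rw [interior_Ici] at hs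
    have h1 := hB s (le_of_lt hs)
    have h2 := hrange s (le_of_lt hs)
    have h3 := (hpos (x s, y s) (le_of_lt h1.1) h2.1.2 (le_of_lt h1.2) h2.2.2).2
    exact mul_nonneg (mul_nonneg h2.2.1 (by linarith [h2.2.2])) (le_of_lt h3)
  -- limits
  obtain ⟨L, hxleL, hx0L, hL1, hLt⟩ :=
    repl_lim_aux x hmonox (fun t ht => (hrange t ht).1.2)
  obtain ⟨M, hyleM, hy0M, hM1, hMt⟩ :=
    repl_lim_aux y hmonoy (fun t ht => (hrange t ht).2.2)
  have hLlb : 1 - ε ≤ L := le_trans (le_of_lt hx0.1) hx0L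
  have hMlb : 1 - ε ≤ M := le_trans (le_of_lt hy0.1) hy0M
  have hL : L = 1 :=
    repl_limone_aux f hf ε hε1 (fun p a b c d => (hpos p a b c d).1) x y L M hx
      (fun t ht => le_of_lt (hB t ht).1) hxleL hL1 hMlb hM1 hLt hMt
  have hM : M = 1 :=
    repl_limone_aux (fun p => g (p.2, p.1))
      (hg.comp (continuous_snd.prodMk continuous_fst)) ε hε1
      (fun p a b c d => (hpos (p.2, p.1) c d a b).2) y x M L
      (fun t ht => hy t ht)
      (fun t ht => le_of_lt (hB t ht).2) hyleM hM1 hLlb hL1 hMt hLt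
  subst hL; subst hM
  exact ⟨hmonox, hmonoy, hLt.prodMk_nhds hMt⟩
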